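/- Fix n ≥ 1, q > 1, t > 0. For all x̂ = (x,z), ŷ = (y,w) in ℝ^n × [-t,t] with x ≠ y, the strip kernel G_t(x̂,ŷ) = ∑_{j ∈ ℤ} (|x-y|² + (z - 2tj - (-1)^j w)²)^{-q/2} satisfies |G_t(x̂,ŷ) − (c_{q-1}/t)|x-y|^{1-q}| ≤ C_q |x-y|^{-q}, where c_{q-1} = (1/2)∫_ℝ (1+s²)^{-q/2} ds and C_q depends only on q. -/

import Mathlib

open Real MeasureTheory Set

private lemma sk_nonneg (q r u : ℝ) : 0 ≤ (r ^ 2 + u ^ 2) ^ (-q / 2) :=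
  Real.rpow_nonneg (by positivity) _

private lemma sk_mono {q r : ℝ} (hq : 1 < q) (hr : 0 < r) {u v : ℝ} (huv : |u| ≤ |v|) :
    (r ^ 2 + v ^ 2) ^ (-q / 2) ≤ (r ^ 2 + u ^ 2) ^ (-q / 2) := by
  have h2 : u ^ 2 ≤ v ^ 2 := by
    rw [← sq_abs u, ← sq_abs v]
    exact pow_le_pow_left₀ (abs_nonneg u) huv 2
  exact Real.rpow_le_rpow_of_nonpos (by positivity) (by linarith) (by linarith)

private lemma sk_rq {q r : ℝ} (hr : 0 < r) : ((r ^ 2 : ℝ)) ^ (-q / 2) = r ^ (-q) := by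
  rw [← Real.rpow_natCast r 2, ← Real.rpow_mul hr.le]
  norm_num
  congr 1
  ring

private lemma sk_top {q r : ℝ} (hq : 1 < q) (hr : 0 < r) (u : ℝ) :
    (r ^ 2 + u ^ 2) ^ (-q / 2) ≤ r ^ (-q) := by
  have h1 : (r ^ 2 + u ^ 2) ^ (-q / 2) ≤ (r ^ 2 : ℝ) ^ (-q / 2) :=
    Real.rpow_le_rpow_of_nonpos (by positivity) (by nlinarith [sq_nonneg u]) (by linarith)
  rw [sk_rq hr] at h1
  exact h1

private lemma sk_int_base {q : ℝ} (hq : 1 < q) :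
    Integrable (fun s : ℝ => (1 + s ^ 2) ^ (-q / 2)) := by
  have h := integrable_rpow_neg_one_add_norm_sq (E := ℝ) (μ := volume) (r := q)
    (by simpa using hq)
  simpa [Real.norm_eq_abs, sq_abs] using h

private lemma sk_int {q r : ℝ} (hq : 1 < q) (hr : 0 < r) :
    Integrable (fun u : ℝ => (r ^ 2 + u ^ 2) ^ (-q / 2)) := by
  have h2 := ((sk_int_base hq).comp_mul_left' (R := r⁻¹) (inv_ne_zero hr.ne')).const_mul
    (r ^ (-q))
  refine h2.congr ?_    -- wrong direction? Integrable.congr : Integrable f → f =ᵐ g → Integrable g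
  refine Filter.Eventually.of_forall fun u => ?_
  have h1 : (1 : ℝ) + (r⁻¹ * u) ^ 2 = (r ^ 2 + u ^ 2) / r ^ 2 := by
    field_simp
  show r ^ (-q) * (1 + (r⁻¹ * u) ^ 2) ^ (-q / 2) = (r ^ 2 + u ^ 2) ^ (-q / 2)
  rw [h1, Real.div_rpow (by positivity) (by positivity), sk_rq hr,
    mul_div_cancel₀ _ (ne_of_gt (Real.rpow_pos_of_pos hr _))]

private lemma sk_intval {q r : ℝ} (hq : 1 < q) (hr : 0 < r) :
    ∫ u : ℝ, (r ^ 2 + u ^ 2) ^ (-q / 2)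
      = r ^ (1 - q) * ∫ s : ℝ, (1 + s ^ 2) ^ (-q / 2) := by
  have h := MeasureTheory.Measure.integral_comp_mul_left
    (fun u : ℝ => (r ^ 2 + u ^ 2) ^ (-q / 2)) r
  have key : ∀ s : ℝ, (r ^ 2 + (r * s) ^ 2) ^ (-q / 2)
      = r ^ (-q) * (1 + s ^ 2) ^ (-q / 2) := by
    intro s
    have h0 : r ^ 2 + (r * s) ^ 2 = r ^ 2 * (1 + s ^ 2) := by ring
    rw [h0, Real.mul_rpow (by positivity) (by positivity), sk_rq hr]
  simp only [key] at h
  rw [MeasureTheory.integral_const_mul, smul_eq_mul, abs_of_pos (inv_pos.mpr hr)] at h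
  have h2 : ∫ u : ℝ, (r ^ 2 + u ^ 2) ^ (-q / 2)
      = r * (r ^ (-q) * ∫ s : ℝ, (1 + s ^ 2) ^ (-q / 2)) := by
    rw [h]
    field_simp
  rw [h2, ← mul_assoc]
  congr 1
  rw [← Real.rpow_one_add' hr.le (by intro hcon; linarith [hcon] : 1 + -q ≠ 0),
    (by ring : (1 : ℝ) + -q = 1 - q)]

private lemma sk_cover {h : ℝ} (hh : 0 < h) :
    (⋃ k : ℤ, Ioc (h * ((k : ℝ) - 1)) (h * (k : ℝ))) = univ := by
  ext u
  simp only [mem_iUnion, mem_Ioc, mem_univ, iff_true]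
  refine ⟨⌈u / h⌉, ?_, ?_⟩
  · have h1 : (⌈u / h⌉ : ℝ) < u / h + 1 := Int.ceil_lt_add_one _
    have h2 : h * ((⌈u / h⌉ : ℝ) - 1) < h * (u / h) :=
      mul_lt_mul_of_pos_left (by linarith) hh
    rwa [mul_div_cancel₀ _ hh.ne'] at h2
  · have h1 : u / h ≤ (⌈u / h⌉ : ℝ) := Int.le_ceil _
    have h2 : h * (u / h) ≤ h * (⌈u / h⌉ : ℝ) := mul_le_mul_of_nonneg_left h1 hh.le
    rwa [mul_div_cancel₀ _ hh.ne'] at h2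

private lemma sk_disj {h : ℝ} (hh : 0 < h) :
    Pairwise (Function.onFun Disjoint
      (fun k : ℤ => Ioc (h * ((k : ℝ) - 1)) (h * (k : ℝ)))) := by
  have key : ∀ k l : ℤ, k < l →
      Disjoint (Ioc (h * ((k : ℝ) - 1)) (h * (k : ℝ)))
        (Ioc (h * ((l : ℝ) - 1)) (h * (l : ℝ))) := by
    intro k l hkl
    rw [Set.disjoint_left]
    rintro u ⟨_, hu2⟩ ⟨hu3, _⟩
    have hkl' : (k : ℝ) ≤ (l : ℝ) - 1 := by
      have : (k : ℝ) + 1 ≤ (l : ℝ) := by exact_mod_cast hkl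
      linarith
    have : h * (k : ℝ) ≤ h * ((l : ℝ) - 1) := mul_le_mul_of_nonneg_left hkl' hh.le
    linarith
  intro k l hkl
  rcases hkl.lt_or_gt with h' | h'
  · exact key _ _ h'
  · exact (key _ _ h').symm

private lemma sk_hasSum {q r h : ℝ} (hq : 1 < q) (hr : 0 < r) (hh : 0 < h) :
    HasSum (fun k : ℤ => ∫ u in Ioc (h * ((k : ℝ) - 1)) (h * (k : ℝ)),
        (r ^ 2 + u ^ 2) ^ (-q / 2))
      (∫ u : ℝ, (r ^ 2 + u ^ 2) ^ (-q / 2)) := by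
  have h1 := MeasureTheory.hasSum_integral_iUnion
    (μ := volume) (f := fun u : ℝ => (r ^ 2 + u ^ 2) ^ (-q / 2))
    (s := fun k : ℤ => Ioc (h * ((k : ℝ) - 1)) (h * (k : ℝ)))
    (fun k => measurableSet_Ioc) (sk_disj hh) ?_
  · rwa [sk_cover hh, MeasureTheory.setIntegral_univ] at h1
  · rw [sk_cover hh]
    exact (sk_int hq hr).integrableOn

private lemma sk_int_ge {q r : ℝ} (hq : 1 < q) (hr : 0 < r) {A B : ℝ} (hAB : A ≤ B) (v : ℝ)
    (hv : ∀ u ∈ Ioc A B, |u| ≤ |v|) :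
    (B - A) * (r ^ 2 + v ^ 2) ^ (-q / 2) ≤ ∫ u in Ioc A B, (r ^ 2 + u ^ 2) ^ (-q / 2) := by
  have h1 : ∫ u in Ioc A B, ((r ^ 2 + v ^ 2) ^ (-q / 2) : ℝ)
      ≤ ∫ u in Ioc A B, (r ^ 2 + u ^ 2) ^ (-q / 2) := by
    apply MeasureTheory.setIntegral_mono_on
    · exact MeasureTheory.integrableOn_const (by simp [Real.volume_Ioc])
    · exact (sk_int hq hr).integrableOn
    · exact measurableSet_Ioc
    · intro u hu
      exact sk_mono hq hr (hv u hu)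
  rw [MeasureTheory.setIntegral_const, Real.volume_real_Ioc, smul_eq_mul,
    max_eq_left (by linarith)] at h1
  exact h1

private lemma sk_int_le {q r : ℝ} (hq : 1 < q) (hr : 0 < r) {A B : ℝ} (hAB : A ≤ B) (v : ℝ)
    (hv : ∀ u ∈ Ioc A B, |v| ≤ |u|) :
    ∫ u in Ioc A B, (r ^ 2 + u ^ 2) ^ (-q / 2) ≤ (B - A) * (r ^ 2 + v ^ 2) ^ (-q / 2) := by
  have h1 : ∫ u in Ioc A B, ((r ^ 2 + u ^ 2) ^ (-q / 2) : ℝ)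
      ≤ ∫ u in Ioc A B, (r ^ 2 + v ^ 2) ^ (-q / 2) := by
    apply MeasureTheory.setIntegral_mono_on
    · exact (sk_int hq hr).integrableOn
    · exact MeasureTheory.integrableOn_const (by simp [Real.volume_Ioc])
    · exact measurableSet_Ioc
    · intro u hu
      exact sk_mono hq hr (hv u hu)
  rwa [MeasureTheory.setIntegral_const, Real.volume_real_Ioc, smul_eq_mul,
    max_eq_left (by linarith)] at h1

private lemma sk_int_le_top {q r : ℝ} (hq : 1 < q) (hr : 0 < r) {A B : ℝ} (hAB : A ≤ B) :
    ∫ u in Ioc A B, (r ^ 2 + u ^ 2) ^ (-q / 2) ≤ (B - A) * r ^ (-q) := by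
  have h1 : ∫ u in Ioc A B, ((r ^ 2 + u ^ 2) ^ (-q / 2) : ℝ)
      ≤ ∫ u in Ioc A B, (r ^ (-q) : ℝ) := by
    apply MeasureTheory.setIntegral_mono_on
    · exact (sk_int hq hr).integrableOn
    · exact MeasureTheory.integrableOn_const (by simp [Real.volume_Ioc])
    · exact measurableSet_Ioc
    · intro u _
      exact sk_top hq hr u
  rwa [MeasureTheory.setIntegral_const, Real.volume_real_Ioc, smul_eq_mul,
    max_eq_left (by linarith)] at h1

private lemma sk_abs_neg_one_zpow (j : ℤ) (w : ℝ) : |(-1 : ℝ) ^ j * w| = |w| := by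
  rw [abs_mul]
  rcases Int.even_or_odd j with hj | hj
  · rw [hj.neg_one_zpow, abs_one, one_mul]
  · rw [Odd.neg_one_zpow hj, abs_neg, abs_one, one_mul]

private lemma sk_abs_low {t z w : ℝ} (ht : 0 < t) (hz : |z| ≤ t) (hw : |w| ≤ t) (j : ℤ) :
    2 * t * |(j : ℝ)| - 2 * t ≤ |z - 2 * t * (j : ℝ) - (-1 : ℝ) ^ j * w| := by
  have h1 : |(-1 : ℝ) ^ j * w| ≤ t := by rw [sk_abs_neg_one_zpow]; exact hw
  have h2 : |z - (-1 : ℝ) ^ j * w| ≤ 2 * t :=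
    (abs_sub _ _).trans (by linarith)
  have h3 : |2 * t * (j : ℝ)| = 2 * t * |(j : ℝ)| := by
    rw [abs_mul, abs_of_pos (by linarith : (0 : ℝ) < 2 * t)]
  have h4 : |2 * t * (j : ℝ)| - |z - (-1 : ℝ) ^ j * w|
      ≤ |2 * t * (j : ℝ) - (z - (-1 : ℝ) ^ j * w)| := abs_sub_abs_le_abs_sub _ _
  have h5 : |2 * t * (j : ℝ) - (z - (-1 : ℝ) ^ j * w)|
      = |z - 2 * t * (j : ℝ) - (-1 : ℝ) ^ j * w| := by
    rw [← abs_neg]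
    congr 1
    ring
  linarith

private lemma sk_abs_high {t z w : ℝ} (ht : 0 < t) (hz : |z| ≤ t) (hw : |w| ≤ t) (j : ℤ) :
    |z - 2 * t * (j : ℝ) - (-1 : ℝ) ^ j * w| ≤ 2 * t * |(j : ℝ)| + 2 * t := by
  have h1 : |(-1 : ℝ) ^ j * w| ≤ t := by rw [sk_abs_neg_one_zpow]; exact hw
  have h2 : |z - (-1 : ℝ) ^ j * w| ≤ 2 * t :=
    (abs_sub _ _).trans (by linarith)
  have h3 : |2 * t * (j : ℝ)| = 2 * t * |(j : ℝ)| := by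
    rw [abs_mul, abs_of_pos (by linarith : (0 : ℝ) < 2 * t)]
  have h5 : |z - 2 * t * (j : ℝ) - (-1 : ℝ) ^ j * w|
      = |(z - (-1 : ℝ) ^ j * w) - 2 * t * (j : ℝ)| := by
    congr 1
    ring
  have h6 : |(z - (-1 : ℝ) ^ j * w) - 2 * t * (j : ℝ)|
      ≤ |z - (-1 : ℝ) ^ j * w| + |2 * t * (j : ℝ)| := abs_sub _ _
  linarith

private lemma sk_summable {q r t z w : ℝ} (hq : 1 < q) (hr : 0 < r) (ht : 0 < t)
    (hz : |z| ≤ t) (hw : |w| ≤ t) :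
    Summable (fun j : ℤ =>
      (r ^ 2 + (z - 2 * t * (j : ℝ) - (-1 : ℝ) ^ j * w) ^ 2) ^ (-q / 2)) := by
  classical
  have hg : Summable (fun j : ℤ =>
      (if j ∈ ({-1, 0, 1} : Finset ℤ) then r ^ (-q) else 0)
        + t ^ (-q) * |(j : ℝ)| ^ (-q)) := by
    apply Summable.add
    · exact summable_of_ne_finset_zero (s := ({-1, 0, 1} : Finset ℤ))
        (fun j hj => if_neg hj)
    · exact (summable_abs_int_rpow hq).mul_left _
  apply Summable.of_nonneg_of_le (fun j => sk_nonneg _ _ _) _ hg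
  intro j
  by_cases hj : j ∈ ({-1, 0, 1} : Finset ℤ)
  · rw [if_pos hj]
    have h1 := sk_top hq hr (z - 2 * t * (j : ℝ) - (-1 : ℝ) ^ j * w)
    have h2 : (0 : ℝ) ≤ t ^ (-q) * |(j : ℝ)| ^ (-q) := by positivity
    linarith
  · rw [if_neg hj, zero_add]
    have hj2 : (2 : ℤ) ≤ |j| := by
      simp only [Finset.mem_insert, Finset.mem_singleton] at hj
      rcases abs_cases j with ⟨h, _⟩ | ⟨h, _⟩ <;> omega
    have hj2' : (2 : ℝ) ≤ |(j : ℝ)| := by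
      rw [← Int.cast_abs]
      exact_mod_cast hj2
    have hlow := sk_abs_low ht hz hw j
    have h1 : t * |(j : ℝ)| ≤ |z - 2 * t * (j : ℝ) - (-1 : ℝ) ^ j * w| := by nlinarith
    have htj : 0 < t * |(j : ℝ)| := by nlinarith
    have h2 : (t * |(j : ℝ)|) ^ 2 ≤ r ^ 2
        + (z - 2 * t * (j : ℝ) - (-1 : ℝ) ^ j * w) ^ 2 := by
      have := pow_le_pow_left₀ (by positivity) h1 2
      rw [sq_abs] at this
      nlinarith [sq_nonneg r]
    have h3 : (r ^ 2 + (z - 2 * t * (j : ℝ) - (-1 : ℝ) ^ j * w) ^ 2) ^ (-q / 2)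
        ≤ ((t * |(j : ℝ)|) ^ 2) ^ (-q / 2) :=
      Real.rpow_le_rpow_of_nonpos (by positivity) h2 (by linarith)
    rw [sk_rq htj, Real.mul_rpow ht.le (abs_nonneg _)] at h3
    exact h3

private lemma sk_div_le {c X Y : ℝ} (hc : 0 < c) (h : c * X ≤ Y) : X ≤ 1 / c * Y := by
  rw [one_div, ← inv_mul_le_iff₀ (inv_pos.mpr hc), inv_inv]
  linarith
private lemma sk_le_div {c X Y : ℝ} (hc : 0 < c) (h : X ≤ c * Y) : 1 / c * X ≤ Y := by
  rw [div_mul_eq_mul_div, div_le_iff₀ hc]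
  linarith

private lemma sk_upper {q r t z w : ℝ} (hq : 1 < q) (hr : 0 < r) (ht : 0 < t)
    (hz : |z| ≤ t) (hw : |w| ≤ t) :
    (∑' j : ℤ, (r ^ 2 + (z - 2 * t * (j : ℝ) - (-1 : ℝ) ^ j * w) ^ 2) ^ (-q / 2))
      ≤ 3 * r ^ (-q) + 1 / (2 * t) * ∫ u : ℝ, (r ^ 2 + u ^ 2) ^ (-q / 2) := by
  classical
  have h2t : (0 : ℝ) < 2 * t := by linarith
  set F : ℤ → ℝ :=
    fun j => (r ^ 2 + (z - 2 * t * (j : ℝ) - (-1 : ℝ) ^ j * w) ^ 2) ^ (-q / 2) with hFdef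
  set Mk : ℤ → ℝ :=
    fun k => ∫ u in Ioc (2 * t * ((k : ℝ) - 1)) (2 * t * (k : ℝ)),
      (r ^ 2 + u ^ 2) ^ (-q / 2) with hMkdef
  have hF : Summable F := sk_summable hq hr ht hz hw
  have hMk : HasSum Mk (∫ u : ℝ, (r ^ 2 + u ^ 2) ^ (-q / 2)) := sk_hasSum hq hr h2t
  have hsplit := Summable.sum_add_tsum_compl (s := ({-1, 0, 1} : Finset ℤ)) hF
  rw [← hsplit]
  have bound1 : ∑ j ∈ ({-1, 0, 1} : Finset ℤ), F j ≤ 3 * r ^ (-q) := by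
    have : ∀ j ∈ ({-1, 0, 1} : Finset ℤ), F j ≤ r ^ (-q) := fun j _ => sk_top hq hr _
    calc ∑ j ∈ ({-1, 0, 1} : Finset ℤ), F j
        ≤ ∑ _j ∈ ({-1, 0, 1} : Finset ℤ), r ^ (-q) := Finset.sum_le_sum this
      _ = 3 * r ^ (-q) := by
          rw [Finset.sum_const]
          norm_num
  have bound2 : (∑' j : ↑(↑({-1, 0, 1} : Finset ℤ) : Set ℤ)ᶜ, F j)
      ≤ 1 / (2 * t) * ∫ u : ℝ, (r ^ 2 + u ^ 2) ^ (-q / 2) := by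
    have hMs : Summable (fun k : ℤ => 1 / (2 * t) * Mk k) := hMk.summable.mul_left _
    have hle := Summable.tsum_le_tsum_of_inj
      (f := fun j : ↑(↑({-1, 0, 1} : Finset ℤ) : Set ℤ)ᶜ => F (j : ℤ))
      (g := fun k : ℤ => 1 / (2 * t) * Mk k)
      (fun j => if 0 < (j : ℤ) then (j : ℤ) - 1 else (j : ℤ) + 2)
      ?inj ?nonneg ?ptwise (hF.subtype _) hMs
    · have : (∑' k : ℤ, 1 / (2 * t) * Mk k)
          = 1 / (2 * t) * ∫ u : ℝ, (r ^ 2 + u ^ 2) ^ (-q / 2) := by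
        rw [tsum_mul_left, hMk.tsum_eq]
      rw [this] at hle
      exact hle
    case inj =>
      rintro ⟨j, hjm⟩ ⟨j', hjm'⟩ hee
      simp only [Set.mem_compl_iff, Finset.coe_insert, Set.mem_insert_iff,
        Finset.coe_singleton, Set.mem_singleton_iff, not_or] at hjm hjm'
      apply Subtype.ext
      simp only at hee ⊢
      split_ifs at hee <;> omega
    case nonneg =>
      intro k _
      have : (0 : ℝ) ≤ Mk k :=
        MeasureTheory.setIntegral_nonneg measurableSet_Ioc fun u _ => sk_nonneg _ _ _
      positivity
    case ptwise =>
      rintro ⟨j, hjm⟩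
      simp only [Set.mem_compl_iff, Finset.coe_insert, Set.mem_insert_iff,
        Finset.coe_singleton, Set.mem_singleton_iff, not_or] at hjm
      obtain ⟨hjn1, hjn0, hjp1⟩ := hjm
      simp only
      apply sk_div_le h2t
      by_cases hjpos : 0 < j
      · have hj2 : (2 : ℤ) ≤ j := by omega
        have hj2R : (2 : ℝ) ≤ (j : ℝ) := by exact_mod_cast hj2
        rw [if_pos hjpos]
        have hcast : ((j - 1 : ℤ) : ℝ) = (j : ℝ) - 1 := by push_cast; ring
        have hclaim : ∀ u ∈ Ioc (2 * t * (((j - 1 : ℤ) : ℝ) - 1)) (2 * t * ((j - 1 : ℤ) : ℝ)),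
            |u| ≤ |z - 2 * t * (j : ℝ) - (-1 : ℝ) ^ j * w| := by
          intro u hu
          rw [hcast] at hu
          obtain ⟨hu1, hu2⟩ := hu
          have hlow := sk_abs_low ht hz hw j
          have hjabs : |(j : ℝ)| = (j : ℝ) := abs_of_pos (by linarith)
          have hupos : 0 < u := lt_of_le_of_lt (by nlinarith) hu1
          rw [abs_of_pos hupos]
          rw [hjabs] at hlow
          linarith
        have hkey := sk_int_ge hq hr
          (by nlinarith [hcast] : 2 * t * (((j - 1 : ℤ) : ℝ) - 1) ≤ 2 * t * ((j - 1 : ℤ) : ℝ))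
          _ hclaim
        have harea : 2 * t * ((j - 1 : ℤ) : ℝ) - 2 * t * (((j - 1 : ℤ) : ℝ) - 1) = 2 * t := by
          ring
        rw [harea] at hkey
        exact hkey
      · have hj2 : j ≤ -2 := by omega
        have hj2R : (j : ℝ) ≤ -2 := by exact_mod_cast hj2
        rw [if_neg hjpos]
        have hcast : ((j + 2 : ℤ) : ℝ) = (j : ℝ) + 2 := by push_cast; ring
        have hclaim : ∀ u ∈ Ioc (2 * t * (((j + 2 : ℤ) : ℝ) - 1)) (2 * t * ((j + 2 : ℤ) : ℝ)),
            |u| ≤ |z - 2 * t * (j : ℝ) - (-1 : ℝ) ^ j * w| := by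
          intro u hu
          rw [hcast] at hu
          obtain ⟨hu1, hu2⟩ := hu
          have hlow := sk_abs_low ht hz hw j
          have hjabs : |(j : ℝ)| = -(j : ℝ) := abs_of_neg (by linarith)
          have huneg : u ≤ 0 := le_trans hu2 (by nlinarith)
          rw [abs_of_nonpos huneg]
          rw [hjabs] at hlow
          have : 2 * t * ((j : ℝ) + 1) < u := by linarith [hu1]
          linarith
        have hkey := sk_int_ge hq hr
          (by nlinarith [hcast] : 2 * t * (((j + 2 : ℤ) : ℝ) - 1) ≤ 2 * t * ((j + 2 : ℤ) : ℝ))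
          _ hclaim
        have harea : 2 * t * ((j + 2 : ℤ) : ℝ) - 2 * t * (((j + 2 : ℤ) : ℝ) - 1) = 2 * t := by
          ring
        rw [harea] at hkey
        exact hkey
  linarith

private lemma sk_lower {q r t z w : ℝ} (hq : 1 < q) (hr : 0 < r) (ht : 0 < t)
    (hz : |z| ≤ t) (hw : |w| ≤ t) :
    1 / (2 * t) * ∫ u : ℝ, (r ^ 2 + u ^ 2) ^ (-q / 2)
      ≤ 3 * r ^ (-q)
        + ∑' j : ℤ, (r ^ 2 + (z - 2 * t * (j : ℝ) - (-1 : ℝ) ^ j * w) ^ 2) ^ (-q / 2) := by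
  classical
  have h2t : (0 : ℝ) < 2 * t := by linarith
  set F : ℤ → ℝ :=
    fun j => (r ^ 2 + (z - 2 * t * (j : ℝ) - (-1 : ℝ) ^ j * w) ^ 2) ^ (-q / 2) with hFdef
  set Mk : ℤ → ℝ :=
    fun k => ∫ u in Ioc (2 * t * ((k : ℝ) - 1)) (2 * t * (k : ℝ)),
      (r ^ 2 + u ^ 2) ^ (-q / 2) with hMkdef
  have hF : Summable F := sk_summable hq hr ht hz hw
  have hMk : HasSum Mk (∫ u : ℝ, (r ^ 2 + u ^ 2) ^ (-q / 2)) := sk_hasSum hq hr h2t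
  have hsplit := Summable.sum_add_tsum_compl (s := ({0, 1, 2} : Finset ℤ)) hMk.summable
  rw [← hMk.tsum_eq, ← hsplit]
  have bound1 : ∑ k ∈ ({0, 1, 2} : Finset ℤ), Mk k ≤ 3 * (2 * t * r ^ (-q)) := by
    have hterm : ∀ k ∈ ({0, 1, 2} : Finset ℤ), Mk k ≤ 2 * t * r ^ (-q) := by
      intro k _
      have := sk_int_le_top (A := 2 * t * ((k : ℝ) - 1)) (B := 2 * t * (k : ℝ)) hq hr
        (by nlinarith : 2 * t * ((k : ℝ) - 1) ≤ 2 * t * (k : ℝ))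
      have harea : 2 * t * (k : ℝ) - 2 * t * ((k : ℝ) - 1) = 2 * t := by ring
      rw [harea] at this
      exact this
    calc ∑ k ∈ ({0, 1, 2} : Finset ℤ), Mk k
        ≤ ∑ _k ∈ ({0, 1, 2} : Finset ℤ), 2 * t * r ^ (-q) := Finset.sum_le_sum hterm
      _ = 3 * (2 * t * r ^ (-q)) := by
          rw [Finset.sum_const]
          norm_num
  have bound2 : (∑' k : ↑(↑({0, 1, 2} : Finset ℤ) : Set ℤ)ᶜ, Mk k)
      ≤ 2 * t * ∑' j : ℤ, F j := by
    have hFs : Summable (fun j : ℤ => 2 * t * F j) := hF.mul_left _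
    have hle := Summable.tsum_le_tsum_of_inj
      (f := fun k : ↑(↑({0, 1, 2} : Finset ℤ) : Set ℤ)ᶜ => Mk (k : ℤ))
      (g := fun j : ℤ => 2 * t * F j)
      (fun k => if 0 < (k : ℤ) then (k : ℤ) - 2 else (k : ℤ) + 1)
      ?inj ?nonneg ?ptwise (hMk.summable.subtype _) hFs
    · rwa [tsum_mul_left] at hle
    case inj =>
      rintro ⟨k, hkm⟩ ⟨k', hkm'⟩ hee
      simp only [Set.mem_compl_iff, Finset.coe_insert, Set.mem_insert_iff,
        Finset.coe_singleton, Set.mem_singleton_iff, not_or] at hkm hkm'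
      apply Subtype.ext
      simp only at hee ⊢
      split_ifs at hee <;> omega
    case nonneg =>
      intro j _
      have : (0 : ℝ) ≤ F j := sk_nonneg _ _ _
      positivity
    case ptwise =>
      rintro ⟨k, hkm⟩
      simp only [Set.mem_compl_iff, Finset.coe_insert, Set.mem_insert_iff,
        Finset.coe_singleton, Set.mem_singleton_iff, not_or] at hkm
      obtain ⟨hk0, hk1, hk2⟩ := hkm
      simp only
      by_cases hkpos : 0 < k
      · have hk3 : (3 : ℤ) ≤ k := by omega
        have hk3R : (3 : ℝ) ≤ (k : ℝ) := by exact_mod_cast hk3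
        rw [if_pos hkpos]
        have hcast : ((k - 2 : ℤ) : ℝ) = (k : ℝ) - 2 := by push_cast; ring
        have hclaim : ∀ u ∈ Ioc (2 * t * ((k : ℝ) - 1)) (2 * t * (k : ℝ)),
            |z - 2 * t * ((k - 2 : ℤ) : ℝ) - (-1 : ℝ) ^ (k - 2 : ℤ) * w| ≤ |u| := by
          intro u hu
          obtain ⟨hu1, hu2⟩ := hu
          have hhigh := sk_abs_high ht hz hw (k - 2)
          have hjabs : |((k - 2 : ℤ) : ℝ)| = (k : ℝ) - 2 := by
            rw [hcast, abs_of_nonneg (by linarith)]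
          rw [hjabs] at hhigh
          have hupos : 0 < u := lt_of_le_of_lt (by nlinarith) hu1
          rw [abs_of_pos hupos]
          nlinarith [hcast]
        have hkey := sk_int_le hq hr
          (by nlinarith : 2 * t * ((k : ℝ) - 1) ≤ 2 * t * (k : ℝ)) _ hclaim
        have harea : 2 * t * (k : ℝ) - 2 * t * ((k : ℝ) - 1) = 2 * t := by ring
        rw [harea] at hkey
        exact hkey
      · have hk3 : k ≤ -1 := by omega
        have hk3R : (k : ℝ) ≤ -1 := by exact_mod_cast hk3
        rw [if_neg hkpos]
        have hcast : ((k + 1 : ℤ) : ℝ) = (k : ℝ) + 1 := by push_cast; ring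
        have hclaim : ∀ u ∈ Ioc (2 * t * ((k : ℝ) - 1)) (2 * t * (k : ℝ)),
            |z - 2 * t * ((k + 1 : ℤ) : ℝ) - (-1 : ℝ) ^ (k + 1 : ℤ) * w| ≤ |u| := by
          intro u hu
          obtain ⟨hu1, hu2⟩ := hu
          have hhigh := sk_abs_high ht hz hw (k + 1)
          have hjabs : |((k + 1 : ℤ) : ℝ)| = -((k : ℝ) + 1) := by
            rw [hcast, abs_of_nonpos (by linarith)]
          rw [hjabs] at hhigh
          have huneg : u ≤ 0 := le_trans hu2 (by nlinarith)
          rw [abs_of_nonpos huneg]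
          nlinarith [hcast]
        have hkey := sk_int_le hq hr
          (by nlinarith : 2 * t * ((k : ℝ) - 1) ≤ 2 * t * (k : ℝ)) _ hclaim
        have harea : 2 * t * (k : ℝ) - 2 * t * ((k : ℝ) - 1) = 2 * t := by ring
        rw [harea] at hkey
        exact hkey
  apply sk_le_div h2t
  calc ∑ k ∈ ({0, 1, 2} : Finset ℤ), Mk k + ∑' k : ↑(↑({0, 1, 2} : Finset ℤ) : Set ℤ)ᶜ, Mk k
      ≤ 3 * (2 * t * r ^ (-q)) + 2 * t * ∑' j : ℤ, F j := by linarith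
    _ = 2 * t * (3 * r ^ (-q) + ∑' j : ℤ, F j) := by ring

/-- Two-sided bound of the strip kernel by the horizontal `(q-1)`-Riesz kernel (case `q > 1`):
there is `C_q` depending only on `q` such that for all `n ≥ 1`, `t > 0`, `x ≠ y` in `ℝⁿ` and
`z, w ∈ [-t,t]`, `|G_t(x̂,ŷ) − (c_{q-1}/t)|x-y|^{1-q}| ≤ C_q |x-y|^{-q}`, where
`c_{q-1} = (1/2)∫_ℝ (1+s²)^{-q/2} ds`. -/
theorem stmt_13 (q : ℝ) (hq : 1 < q) :
    ∃ C : ℝ, ∀ (n : ℕ), 1 ≤ n → ∀ t : ℝ, 0 < t →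
      ∀ (x y : EuclideanSpace ℝ (Fin n)), x ≠ y →
      ∀ z w : ℝ, z ∈ Set.Icc (-t) t → w ∈ Set.Icc (-t) t →
        |(∑' j : ℤ,
              (‖x - y‖ ^ 2 + (z - 2 * t * j - (-1 : ℝ) ^ j * w) ^ 2) ^ (-q / 2)) -
            ((1 / 2) * ∫ s : ℝ, (1 + s ^ 2) ^ (-q / 2)) / t * ‖x - y‖ ^ (1 - q)| ≤
          C * ‖x - y‖ ^ (-q) := by
  refine ⟨3, ?_⟩
  intro n hn t ht x y hxy z w hzm hwm
  have hr : 0 < ‖x - y‖ := by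
    rw [norm_sub_pos_iff]
    exact hxy
  have hz : |z| ≤ t := abs_le.mpr ⟨(Set.mem_Icc.mp hzm).1, (Set.mem_Icc.mp hzm).2⟩
  have hw : |w| ≤ t := abs_le.mpr ⟨(Set.mem_Icc.mp hwm).1, (Set.mem_Icc.mp hwm).2⟩
  have hup := sk_upper hq hr ht hz hw
  have hlo := sk_lower hq hr ht hz hw
  have hval := sk_intval (r := ‖x - y‖) hq hr
  rw [hval] at hup hlo
  have hM : ((1 / 2) * ∫ s : ℝ, (1 + s ^ 2) ^ (-q / 2)) / t * ‖x - y‖ ^ (1 - q)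
      = 1 / (2 * t) * (‖x - y‖ ^ (1 - q) * ∫ s : ℝ, (1 + s ^ 2) ^ (-q / 2)) := by
    field_simp
  rw [hM, abs_le]
  constructor
  · linarith
  · linarith
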